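/- arXiv:1606.04753 — 6 statements merged into one kernel-verified Lean document; each statement's English description precedes it below -/
import Mathlib

section
/- The sequences of pessimistic safe sets S_t and ergodic safe sets Ŝ_t produced by the algorithm are non-decreasing: for all t ≥ 1, S_0 ⊆ S_t ⊆ S_{t+1} and Ŝ_0 ⊆ Ŝ_t ⊆ Ŝ_{t+1}, given that the lower confidence bounds l_t are non-decreasing in t. -/
def Rret {S A : Type*} (f : S → A → S) (Act : S → Set A) (Sb Ss : Set S) : Set S :=
  Ss ∪ {s ∈ Sb | ∃ a ∈ Act s, f s a ∈ Ss}

def RretN {S A : Type*} (f : S → A → S) (Act : S → Set A) (Sb Ss : Set S) : ℕ → Set S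
  | 0 => Ss
  | n + 1 => Rret f Act Sb (RretN f Act Sb Ss n)

def RretBar {S A : Type*} (f : S → A → S) (Act : S → Set A) (Sb Ss : Set S) : Set S :=
  ⋃ n : ℕ, RretN f Act Sb Ss n

def Rreach {S A : Type*} (f : S → A → S) (Act : S → Set A) (Ss : Set S) : Set S :=
  Ss ∪ {s | ∃ sh ∈ Ss, ∃ ah ∈ Act sh, s = f sh ah}

theorem stmt8 {S A : Type*} [Fintype S] (f : S → A → S) (Act : S → Set A)
    (d : S → S → ℝ) (hd : ∀ s, d s s = 0) (L h : ℝ) (hL : 0 < L)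
    (l : ℕ → S → ℝ) (hl : ∀ t s, l t s ≤ l (t + 1) s)
    (St Sh : ℕ → Set S)
    (hinit : Sh 0 = St 0)
    (hsafe0 : St 0 ⊆ {s | l 0 s ≥ h})
    (hreach0 : ∀ s ∈ St 0, s ∈ Rreach f Act (St 0))
    (hSt : ∀ t : ℕ, 1 ≤ t →
      St t = {s | ∃ s' ∈ Sh (t - 1), l t s' - L * d s s' ≥ h})
    (hSh : ∀ t : ℕ, 1 ≤ t →
      Sh t = {s ∈ St t | s ∈ Rreach f Act (Sh (t - 1)) ∧
        s ∈ RretBar f Act (St t) (Sh (t - 1))}) :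
    ∀ t : ℕ, 1 ≤ t →
      St 0 ⊆ St t ∧ St t ⊆ St (t + 1) ∧ Sh 0 ⊆ Sh t ∧ Sh t ⊆ Sh (t + 1) := by
  have key : ∀ t : ℕ, St t ⊆ St (t + 1) ∧ Sh t ⊆ Sh (t + 1) := by
    intro t
    induction t with
    | zero =>
      have hSt1 : St 0 ⊆ St 1 := by
        intro s hs
        rw [hSt 1 le_rfl]
        refine ⟨s, by rwa [hinit], ?_⟩
        simp only [hd, mul_zero, sub_zero]
        exact le_trans (hsafe0 hs) (hl 0 s)
      refine ⟨hSt1, ?_⟩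
      intro s hs
      rw [hSh 1 le_rfl]
      exact ⟨hSt1 (hinit ▸ hs), Or.inl hs, Set.mem_iUnion.2 ⟨0, hs⟩⟩
    | succ t ih =>
      have hSt' : St (t + 1) ⊆ St (t + 2) := by
        intro s hs
        rw [hSt (t + 1) (by omega)] at hs
        rw [hSt (t + 2) (by omega)]
        simp only [Nat.add_sub_cancel, show t + 2 - 1 = t + 1 from rfl] at *
        obtain ⟨s', hs', hge⟩ := hs
        refine ⟨s', ih.2 hs', ?_⟩
        have := hl (t + 1) s'
        linarith
      refine ⟨hSt', ?_⟩
      intro s hs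
      have hmem := hSh (t + 1) (by omega) ▸ hs
      rw [hSh (t + 2) (by omega)]
      exact ⟨hSt' hmem.1, Or.inl hs, Set.mem_iUnion.2 ⟨0, hs⟩⟩
  have hchain : ∀ n, St 0 ⊆ St n ∧ Sh 0 ⊆ Sh n := by
    intro n
    induction n with
    | zero => exact ⟨subset_rfl, subset_rfl⟩
    | succ n ih => exact ⟨ih.1.trans (key n).1, ih.2.trans (key n).2⟩
  intro t _
  exact ⟨(hchain t).1, (key t).1, (hchain t).2, (key t).2⟩
end

section
/- For all t ≥ 1 and all s ∈ Ŝ_t, there exists a state s' ∈ S_0 such that s ∈ R̄^ret(S_t, {s'}); i.e., from any state in the ergodic safe set there is a path through the pessimistic safe set S_t back to some initial safe state. -/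
lemma Rret_mono {S A : Type*} (f : S → A → S) (Act : S → Set A) {Sb Sb' Ss Ss' : Set S}
    (hb : Sb ⊆ Sb') (hs : Ss ⊆ Ss') : Rret f Act Sb Ss ⊆ Rret f Act Sb' Ss' := by
  rintro s (hs0 | ⟨h1, a, ha, hfa⟩)
  · exact Or.inl (hs hs0)
  · exact Or.inr ⟨hb h1, a, ha, hs hfa⟩

lemma RretN_mono {S A : Type*} (f : S → A → S) (Act : S → Set A) {Sb Sb' Ss Ss' : Set S}
    (hb : Sb ⊆ Sb') (hs : Ss ⊆ Ss') (n : ℕ) :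
    RretN f Act Sb Ss n ⊆ RretN f Act Sb' Ss' n := by
  induction n with
  | zero => exact hs
  | succ n ih => exact Rret_mono f Act hb ih

lemma RretN_add {S A : Type*} (f : S → A → S) (Act : S → Set A) (Sb Ss : Set S) (n m : ℕ) :
    RretN f Act Sb (RretN f Act Sb Ss m) n = RretN f Act Sb Ss (n + m) := by
  induction n with
  | zero => show RretN f Act Sb Ss m = _; rw [Nat.zero_add]
  | succ n ih =>
    rw [Nat.succ_add]
    show Rret f Act Sb _ = Rret f Act Sb _
    rw [ih]

lemma RretN_single {S A : Type*} (f : S → A → S) (Act : S → Set A) {Sb Ss : Set S} {s : S}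
    (n : ℕ) (hs : s ∈ RretN f Act Sb Ss n) :
    ∃ s0 ∈ Ss, s ∈ RretN f Act Sb {s0} n := by
  induction n generalizing s with
  | zero => exact ⟨s, hs, rfl⟩
  | succ n ih =>
    rcases hs with hs' | ⟨h1, a, ha, hfa⟩
    · obtain ⟨s0, hs0, hmem⟩ := ih hs'
      exact ⟨s0, hs0, Or.inl hmem⟩
    · obtain ⟨s0, hs0, hmem⟩ := ih hfa
      exact ⟨s0, hs0, Or.inr ⟨h1, a, ha, hmem⟩⟩

theorem stmt9 {S A : Type*} [Fintype S] (f : S → A → S) (Act : S → Set A)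
    (d : S → S → ℝ) (L h : ℝ) (hL : 0 < L)
    (l : ℕ → S → ℝ) (hl : ∀ t s, l t s ≤ l (t + 1) s)
    (St Sh : ℕ → Set S)
    (hinit : Sh 0 = St 0)
    (hStMono : ∀ t, St t ⊆ St (t + 1))
    (hSt : ∀ t : ℕ, 1 ≤ t →
      St t = {s | ∃ s' ∈ Sh (t - 1), l t s' - L * d s s' ≥ h})
    (hSh : ∀ t : ℕ, 1 ≤ t →
      Sh t = {s ∈ St t | s ∈ Rreach f Act (Sh (t - 1)) ∧
        s ∈ RretBar f Act (St t) (Sh (t - 1))}) :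
    ∀ t : ℕ, 1 ≤ t → ∀ s ∈ Sh t,
      ∃ s' ∈ St 0, s ∈ RretBar f Act (St t) {s'} := by
  intro t ht
  induction t, ht using Nat.le_induction with
  | base =>
    intro s hs
    rw [hSh 1 le_rfl] at hs
    obtain ⟨-, -, hbar⟩ := hs
    simp only [RretBar, Set.mem_iUnion] at hbar
    obtain ⟨n, hn⟩ := hbar
    obtain ⟨s0, hs0, hmem⟩ := RretN_single f Act n hn
    rw [hinit] at hs0
    exact ⟨s0, hs0, Set.mem_iUnion.mpr ⟨n, hmem⟩⟩
  | succ t ht ih =>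
    intro s hs
    rw [hSh (t + 1) (by omega)] at hs
    obtain ⟨-, -, hbar⟩ := hs
    simp only [Nat.add_sub_cancel] at hbar
    simp only [RretBar, Set.mem_iUnion] at hbar
    obtain ⟨n, hn⟩ := hbar
    obtain ⟨s0, hs0, hmem⟩ := RretN_single f Act n hn
    obtain ⟨s', hs', hbar'⟩ := ih s0 hs0
    simp only [RretBar, Set.mem_iUnion] at hbar'
    obtain ⟨m, hm⟩ := hbar'
    have hm' : s0 ∈ RretN f Act (St (t + 1)) {s'} m :=
      RretN_mono f Act (hStMono t) (subset_refl _) m hm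
    have : s ∈ RretN f Act (St (t + 1)) (RretN f Act (St (t + 1)) {s'} m) n :=
      RretN_mono f Act (subset_refl _) (Set.singleton_subset_iff.mpr hm') n hmem
    rw [RretN_add] at this
    exact ⟨s', hs', Set.mem_iUnion.mpr ⟨n + m, this⟩⟩
end

section
/- If the confidence bounds are correct (l_t(s) ≤ r(s) for all s, t) and every state in S_0 satisfies r(s) ≥ h, then every state in S_t satisfies r(s) ≥ h, for all t ≥ 0 (safety of the pessimistic safe set). -/
theorem stmt10 {S : Type*} [Fintype S]
    (d : S → S → ℝ) (r : S → ℝ) (L h : ℝ) (hL : 0 < L)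
    (hLip : ∀ s s' : S, r s' - L * d s s' ≤ r s)
    (l : ℕ → S → ℝ) (hl : ∀ t s, l t s ≤ r s)
    (St Sh : ℕ → Set S)
    (hinit : Sh 0 = St 0)
    (hsafe0 : ∀ s ∈ St 0, r s ≥ h)
    (hShSub : ∀ t, Sh t ⊆ St t)
    (hSt : ∀ t : ℕ, 1 ≤ t →
      St t = {s | ∃ s' ∈ Sh (t - 1), l t s' - L * d s s' ≥ h}) :
    ∀ t : ℕ, ∀ s ∈ St t, r s ≥ h := by
  intro t s hs
  rcases Nat.eq_zero_or_pos t with ht | ht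
  · exact hsafe0 s (ht ▸ hs)
  · rw [hSt t ht] at hs
    obtain ⟨s', _, hs'⟩ := hs
    calc h ≤ l t s' - L * d s s' := hs'
      _ ≤ r s' - L * d s s' := by linarith [hl t s']
      _ ≤ r s := hLip s s'
end

section
/- If the uncertainties are non-increasing (u_{t+1}(s) ≤ u_t(s)), the sets S_t are non-decreasing, and the ergodic safe set does not change between times t_0 and t_1 (Ŝ_{t_1} = Ŝ_{t_0}), then the expander sets are nested: G_{t+1} ⊆ G_t for all t_0 ≤ t < t_1. -/
/-- Enlargement count: number of unsafe states that the upper bound at `s` certifies safe. -/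
noncomputable def gcount {S : Type*} (d : S → S → ℝ) (u : ℕ → S → ℝ) (L h : ℝ)
    (St : ℕ → Set S) (t : ℕ) (s : S) : ℕ :=
  Set.ncard {s' : S | s' ∉ St t ∧ u t s - L * d s s' ≥ h}

/-- Expander set `G_t = {s ∈ Ŝ_t | g_t(s) > 0}`. -/
noncomputable def Gset {S : Type*} (d : S → S → ℝ) (u : ℕ → S → ℝ) (L h : ℝ)
    (St Sh : ℕ → Set S) (t : ℕ) : Set S :=
  {s ∈ Sh t | 0 < gcount d u L h St t s}

theorem stmt11 {S : Type*} [Fintype S]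
    (d : S → S → ℝ) (L h : ℝ) (hL : 0 < L)
    (u : ℕ → S → ℝ) (hu : ∀ t s, u (t + 1) s ≤ u t s)
    (St Sh : ℕ → Set S)
    (hStMono : ∀ t, St t ⊆ St (t + 1))
    (hShSub : ∀ t, Sh t ⊆ St t)
    (hShMono : ∀ t, Sh t ⊆ Sh (t + 1))
    (t₀ t₁ : ℕ) (ht : t₀ ≤ t₁) (hfix : Sh t₁ = Sh t₀) :
    ∀ t, t₀ ≤ t → t < t₁ →
      Gset d u L h St Sh (t + 1) ⊆ Gset d u L h St Sh t := by
  have hmono : ∀ a b, a ≤ b → Sh a ⊆ Sh b := by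
    intro a b hab
    induction hab with
    | refl => exact subset_rfl
    | step _ ih => exact ih.trans (hShMono _)
  intro t ht0 ht1 s hs
  obtain ⟨hsSh, hg⟩ := hs
  -- Sh (t+1) ⊆ Sh t₁ = Sh t₀ ⊆ Sh t
  have hsSh' : s ∈ Sh t := by
    have h1 : s ∈ Sh t₁ := hmono (t + 1) t₁ ht1 hsSh
    rw [hfix] at h1
    exact hmono t₀ t ht0 h1
  refine ⟨hsSh', ?_⟩
  -- the witness set at t+1 is nonempty, and it's a subset of the set at t
  have hne : {s' : S | s' ∉ St (t + 1) ∧ u (t + 1) s - L * d s s' ≥ h}.Nonempty := by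
    rw [Set.nonempty_iff_ne_empty]
    intro hempty
    simp [gcount, hempty] at hg
  obtain ⟨s', hs1, hs2⟩ := hne
  have hmem : s' ∈ {s' : S | s' ∉ St t ∧ u t s - L * d s s' ≥ h} := by
    refine ⟨fun hc => hs1 (hStMono t hc), ?_⟩
    have := hu t s
    linarith
  have : ({s' : S | s' ∉ St t ∧ u t s - L * d s s' ≥ h}).Nonempty := ⟨s', hmem⟩
  exact Set.ncard_pos (Set.toFinite _) |>.mpr this
end

section
/- If the fully ε-safely-reachable set is not contained in the current ergodic safe set (R̄_ε(S_0) \ Ŝ_t ≠ ∅), then one application of the safe-expansion operator to Ŝ_t yields a new state: R_ε(Ŝ_t) \ Ŝ_t ≠ ∅. -/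
def Rsafe {S : Type*} (d : S → S → ℝ) (r : S → ℝ) (L h ε : ℝ) (Ss : Set S) : Set S :=
  Ss ∪ {s | ∃ s' ∈ Ss, r s' - ε - L * d s s' ≥ h}

def Reps {S A : Type*} (f : S → A → S) (Act : S → Set A) (d : S → S → ℝ)
    (r : S → ℝ) (L h ε : ℝ) (Ss : Set S) : Set S :=
  Rreach f Act Ss ∩ RretBar f Act (Rsafe d r L h ε Ss) Ss

def RepsBar {S A : Type*} (f : S → A → S) (Act : S → Set A) (d : S → S → ℝ)
    (r : S → ℝ) (L h ε : ℝ) (Ss : Set S) : Set S :=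
  ⋃ n : ℕ, (Reps f Act d r L h ε)^[n] Ss


lemma RretBar_mono {S A : Type*} (f : S → A → S) (Act : S → Set A) {Sb Sb' Ss Ss' : Set S}
    (hb : Sb ⊆ Sb') (hs : Ss ⊆ Ss') : RretBar f Act Sb Ss ⊆ RretBar f Act Sb' Ss' :=
  Set.iUnion_mono fun n => RretN_mono f Act hb hs n

lemma Rreach_mono {S A : Type*} (f : S → A → S) (Act : S → Set A) {Ss Ss' : Set S}
    (hs : Ss ⊆ Ss') : Rreach f Act Ss ⊆ Rreach f Act Ss' := by
  rintro s (h | ⟨sh, hsh, ah, hah, rfl⟩)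
  · exact Or.inl (hs h)
  · exact Or.inr ⟨sh, hs hsh, ah, hah, rfl⟩

lemma Rsafe_mono {S : Type*} (d : S → S → ℝ) (r : S → ℝ) (L h ε : ℝ) {Ss Ss' : Set S}
    (hs : Ss ⊆ Ss') : Rsafe d r L h ε Ss ⊆ Rsafe d r L h ε Ss' := by
  rintro s (hh | ⟨s', hs', hr⟩)
  · exact Or.inl (hs hh)
  · exact Or.inr ⟨s', hs hs', hr⟩

lemma Reps_mono {S A : Type*} (f : S → A → S) (Act : S → Set A) (d : S → S → ℝ)
    (r : S → ℝ) (L h ε : ℝ) {Ss Ss' : Set S} (hs : Ss ⊆ Ss') :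
    Reps f Act d r L h ε Ss ⊆ Reps f Act d r L h ε Ss' :=
  Set.inter_subset_inter (Rreach_mono f Act hs)
    (RretBar_mono f Act (Rsafe_mono d r L h ε hs) hs)

theorem stmt12 {S A : Type*} [Fintype S] (f : S → A → S) (Act : S → Set A)
    (d : S → S → ℝ) (r : S → ℝ) (L h ε : ℝ) (hL : 0 < L) (hε : 0 ≤ ε)
    (S0 Sht : Set S) (hS0 : S0 ⊆ Sht)
    (hexp : ∀ T : Set S, T ⊆ Reps f Act d r L h ε T)
    (hne : (RepsBar f Act d r L h ε S0 \ Sht).Nonempty) :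
    (Reps f Act d r L h ε Sht \ Sht).Nonempty := by
  by_contra hcon
  rw [Set.not_nonempty_iff_eq_empty, Set.diff_eq_empty] at hcon
  obtain ⟨x, hx, hxn⟩ := hne
  apply hxn
  obtain ⟨T, ⟨n, rfl⟩, hxT⟩ := hx
  clear hxn
  induction n generalizing x with
  | zero => exact hS0 hxT
  | succ n ih =>
    simp only [Function.iterate_succ_apply'] at hxT
    exact hcon (Reps_mono f Act d r L h ε ih hxT)
end

section
/- Suppose Ŝ_t is a non-decreasing sequence of subsets of a finite set with |Ŝ_t| ≤ M for all t, Ŝ_0 ≠ ∅, and T : ℕ → ℕ is a non-decreasing function. Let t* be the smallest integer with t* ≥ M · T(t*). Then there exists t_0 ≤ t* such that Ŝ_{t_0 + T(t_0)} = Ŝ_{t_0}. -/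
theorem stmt14 {α : Type*} [Fintype α]
    (Sh : ℕ → Set α) (hmono : ∀ s t : ℕ, s ≤ t → Sh s ⊆ Sh t)
    (M : ℕ) (hcard : ∀ t, (Sh t).ncard ≤ M)
    (hne : (Sh 0).Nonempty)
    (T : ℕ → ℕ) (hT : Monotone T)
    (tstar : ℕ) (hstar : M * T tstar ≤ tstar)
    (hmin : ∀ t, M * T t ≤ t → tstar ≤ t) :
    ∃ t₀ ≤ tstar, Sh (t₀ + T t₀) = Sh t₀ := by
  by_contra hcon
  push_neg at hcon
  -- strict growth at every t ≤ tstar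
  have hgrow : ∀ t ≤ tstar, Sh t ⊂ Sh (t + T t) := fun t ht =>
    ⟨hmono t (t + T t) (Nat.le_add_right _ _), fun h =>
      hcon t ht (Set.Subset.antisymm h (hmono t (t + T t) (Nat.le_add_right _ _)))⟩
  -- T tstar > 0, else tstar itself works
  have hTpos : 0 < T tstar :=
    Nat.pos_of_ne_zero fun h0 => hcon tstar le_rfl (by simp [h0])
  have key : ∀ k ≤ M, k + 1 ≤ (Sh (k * T tstar)).ncard := by
    intro k
    induction k with
    | zero =>
      intro _
      simpa using Nat.one_le_iff_ne_zero.mpr ((Set.ncard_pos (Set.toFinite _)).mpr (by simpa using hne)).ne'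
    | succ k ih =>
      intro hk
      have hk' : k ≤ M := Nat.le_of_succ_le hk
      have hle : k * T tstar ≤ tstar :=
        le_trans (Nat.mul_le_mul_right _ hk') hstar
      have hsub : Sh (k * T tstar) ⊂ Sh ((k + 1) * T tstar) := by
        refine lt_of_lt_of_le (hgrow _ hle) (hmono _ _ ?_)
        have : T (k * T tstar) ≤ T tstar := hT hle
        calc k * T tstar + T (k * T tstar) ≤ k * T tstar + T tstar :=
              Nat.add_le_add_left this _
          _ = (k + 1) * T tstar := by ring
      have hlt : (Sh (k * T tstar)).ncard < (Sh ((k + 1) * T tstar)).ncard :=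
        Set.ncard_lt_ncard hsub (Set.toFinite _)
      exact lt_of_lt_of_le (lt_of_le_of_lt (ih hk') hlt) le_rfl
  have := key M le_rfl
  exact absurd (le_trans this (hcard _)) (by omega)
end
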